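/- Fix R > 0 and define F_R : L⁴(0,1) → L²(0,1) by F_R(x) = x² if ‖x‖_{L⁴} ≤ R and F_R(x) = R²·x²/‖x‖²_{L⁴} if ‖x‖_{L⁴} ≥ R. Then there exist α > 0, β > 0 with 2α/(1−β) ∈ [1,2), and a constant c_R > 0, such that for all continuously differentiable functions x, y : [0,1] → ℝ with x(0) = x(1) = y(0) = y(1) = 0 one has ‖F_R(x) − F_R(y)‖_{L²} ≤ c_R·‖x − y‖_{L²}^α·(∫₀¹ (x'(ξ) − y'(ξ))² dξ)^{β/2}. -/

import Mathlib

open MeasureTheory intervalIntegral Set ENNReal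

set_option maxHeartbeats 1000000

lemma aux_fin : IsFiniteMeasure (volume.restrict (Set.Ioc (0:ℝ) 1)) :=
  ⟨by rw [Measure.restrict_apply_univ]; simp⟩

lemma aux_memLp {f : ℝ → ℝ} (hf : ContinuousOn f (Set.Icc 0 1)) (p : ℝ≥0∞) :
    MemLp f p (volume.restrict (Set.Ioc (0:ℝ) 1)) := by
  haveI := aux_fin
  obtain ⟨C, hC⟩ := isCompact_Icc.exists_bound_of_continuousOn hf
  refine MemLp.of_bound ?_ C ?_
  · exact ((hf.mono Set.Ioc_subset_Icc_self).aestronglyMeasurable measurableSet_Ioc)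
  · exact (ae_restrict_iff' measurableSet_Ioc).2 (Filter.Eventually.of_forall
      fun t ht => hC t (Set.Ioc_subset_Icc_self ht))

lemma aux_intg {f : ℝ → ℝ} (hf : ContinuousOn f (Set.Icc 0 1)) :
    IntegrableOn f (Set.Ioc (0:ℝ) 1) volume :=
  (hf.integrableOn_Icc).mono_set Set.Ioc_subset_Icc_self

lemma aux_cs {f g : ℝ → ℝ} (hf : ContinuousOn f (Set.Icc 0 1))
    (hg : ContinuousOn g (Set.Icc 0 1)) :
    ∫ t in Set.Ioc (0:ℝ) 1, |f t| * |g t| ≤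
      (∫ t in Set.Ioc (0:ℝ) 1, f t ^ 2) ^ ((1:ℝ)/2) *
      (∫ t in Set.Ioc (0:ℝ) 1, g t ^ 2) ^ ((1:ℝ)/2) := by
  have hpq : (2:ℝ).HolderConjugate 2 := by constructor <;> norm_num
  have h := integral_mul_norm_le_Lp_mul_Lq (μ := volume.restrict (Set.Ioc (0:ℝ) 1))
    hpq (aux_memLp hf _) (aux_memLp hg _)
  simp only [Real.norm_eq_abs] at h
  have e1 : ∀ (u : ℝ → ℝ), (∫ t in Set.Ioc (0:ℝ) 1, |u t| ^ (2:ℝ)) =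
      ∫ t in Set.Ioc (0:ℝ) 1, u t ^ 2 := by
    intro u
    refine integral_congr_ae (Filter.Eventually.of_forall fun t => ?_)
    show |u t| ^ (2:ℝ) = u t ^ 2
    rw [show |u t| ^ (2:ℝ) = |u t| ^ (2:ℕ) from by
        rw [← Real.rpow_natCast (|u t|) 2]; norm_num, sq_abs]
  rw [e1, e1] at h
  exact h

lemma aux_pq (p q : ℝ) : (p + q)^4 ≤ 8*p^4 + 8*q^4 := by
  nlinarith [sq_nonneg (p - q), sq_nonneg (p + q), sq_nonneg (p^2 - q^2), sq_nonneg (p^2 + q^2)]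

lemma aux_rpow_half_le {s c : ℝ} (hc : 0 ≤ c) (h : s ≤ c^2) : s ^ ((1:ℝ)/2) ≤ c := by
  rw [← Real.sqrt_eq_rpow]
  calc Real.sqrt s ≤ Real.sqrt (c^2) := Real.sqrt_le_sqrt h
    _ = c := Real.sqrt_sq hc

lemma aux_quarter {A : ℝ} (hA : 0 ≤ A) : (A ^ ((1:ℝ)/4))^4 = A := by
  rw [← Real.rpow_natCast (A ^ ((1:ℝ)/4)) 4, ← Real.rpow_mul hA]
  norm_num

lemma aux_const_bound {f : ℝ → ℝ} (hf : IntegrableOn f (Set.Ioc (0:ℝ) 1) volume)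
    {C : ℝ} (h : ∀ t ∈ Set.Ioc (0:ℝ) 1, f t ≤ C) :
    ∫ t in Set.Ioc (0:ℝ) 1, f t ≤ C := by
  calc ∫ t in Set.Ioc (0:ℝ) 1, f t ≤ ∫ _t in Set.Ioc (0:ℝ) 1, C :=
        setIntegral_mono_on hf (integrableOn_const (by simp)) measurableSet_Ioc h
    _ = C := by simp

lemma aux_cube {h : ℝ → ℝ} (hc : ContinuousOn h (Set.Icc 0 1)) (h0 : ∀ t, 0 ≤ h t) :
    ∫ t in Set.Ioc (0:ℝ) 1, h t ^ 3 ≤ (∫ t in Set.Ioc (0:ℝ) 1, h t ^ 4) ^ ((3:ℝ)/4) := by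
  set I4 := ∫ t in Set.Ioc (0:ℝ) 1, h t ^ 4 with hI4
  have hI40 : 0 ≤ I4 := setIntegral_nonneg measurableSet_Ioc (fun t _ => by positivity)
  have hI20 : 0 ≤ ∫ t in Set.Ioc (0:ℝ) 1, h t ^ 2 :=
    setIntegral_nonneg measurableSet_Ioc (fun t _ => by positivity)
  have hc2 : ContinuousOn (fun t => h t ^ 2) (Set.Icc 0 1) := hc.pow 2
  -- step 1 : ∫ h^3 ≤ (∫ h^2)^(1/2) * I4^(1/2)
  have s1 : ∫ t in Set.Ioc (0:ℝ) 1, h t ^ 3 ≤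
      (∫ t in Set.Ioc (0:ℝ) 1, h t ^ 2) ^ ((1:ℝ)/2) * I4 ^ ((1:ℝ)/2) := by
    have := aux_cs hc hc2
    have e1 : (∫ t in Set.Ioc (0:ℝ) 1, |h t| * |h t ^ 2|) =
        ∫ t in Set.Ioc (0:ℝ) 1, h t ^ 3 := by
      refine integral_congr_ae (Filter.Eventually.of_forall fun t => ?_)
      show |h t| * |h t ^ 2| = h t ^ 3
      rw [abs_of_nonneg (h0 t), abs_of_nonneg (by positivity)]; ring
    have e2 : (∫ t in Set.Ioc (0:ℝ) 1, (h t ^ 2) ^ 2) = I4 := by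
      refine integral_congr_ae (Filter.Eventually.of_forall fun t => ?_)
      show (h t ^ 2) ^ 2 = h t ^ 4
      ring
    rw [e1, e2] at this
    exact this
  -- step 2 : ∫ h^2 ≤ I4^(1/2)
  have s2 : (∫ t in Set.Ioc (0:ℝ) 1, h t ^ 2) ≤ I4 ^ ((1:ℝ)/2) := by
    have := aux_cs hc2 (continuousOn_const (c := (1:ℝ)))
    have e1 : (∫ t in Set.Ioc (0:ℝ) 1, |h t ^ 2| * |(1:ℝ)|) =
        ∫ t in Set.Ioc (0:ℝ) 1, h t ^ 2 := by
      refine integral_congr_ae (Filter.Eventually.of_forall fun t => ?_)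
      show |h t ^ 2| * |(1:ℝ)| = h t ^ 2
      rw [abs_of_nonneg (by positivity : (0:ℝ) ≤ h t ^ 2), abs_one, mul_one]
    have e2 : (∫ t in Set.Ioc (0:ℝ) 1, (h t ^ 2) ^ 2) = I4 := by
      refine integral_congr_ae (Filter.Eventually.of_forall fun t => ?_)
      show (h t ^ 2) ^ 2 = h t ^ 4
      ring
    have e3 : (∫ _t in Set.Ioc (0:ℝ) 1, ((1:ℝ)) ^ 2) = 1 := by simp
    rw [e1, e2, e3] at this
    simpa using this
  have s3 : (∫ t in Set.Ioc (0:ℝ) 1, h t ^ 2) ^ ((1:ℝ)/2) ≤ I4 ^ ((1:ℝ)/4) := by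
    calc (∫ t in Set.Ioc (0:ℝ) 1, h t ^ 2) ^ ((1:ℝ)/2)
        ≤ (I4 ^ ((1:ℝ)/2)) ^ ((1:ℝ)/2) := Real.rpow_le_rpow hI20 s2 (by norm_num)
      _ = I4 ^ ((1:ℝ)/4) := by rw [← Real.rpow_mul hI40]; norm_num
  calc ∫ t in Set.Ioc (0:ℝ) 1, h t ^ 3
      ≤ (∫ t in Set.Ioc (0:ℝ) 1, h t ^ 2) ^ ((1:ℝ)/2) * I4 ^ ((1:ℝ)/2) := s1
    _ ≤ I4 ^ ((1:ℝ)/4) * I4 ^ ((1:ℝ)/2) :=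
        mul_le_mul_of_nonneg_right s3 (Real.rpow_nonneg hI40 _)
    _ = I4 ^ ((3:ℝ)/4) := by
        rw [← Real.rpow_add' hI40 (by norm_num)]; norm_num

lemma aux_split {u v z w : ℝ → ℝ} (hz : ContinuousOn z (Set.Icc 0 1))
    (hw : ContinuousOn w (Set.Icc 0 1)) (c₁ c₂ : ℝ)
    (hpt : ∀ t, u t - v t = c₁ * z t + c₂ * w t) :
    ∫ t in Set.Ioc (0:ℝ) 1, (u t - v t)^4 ≤
      8*c₁^4 * (∫ t in Set.Ioc (0:ℝ) 1, z t^4) + 8*c₂^4 * (∫ t in Set.Ioc (0:ℝ) 1, w t^4) := by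
  have e : (∫ t in Set.Ioc (0:ℝ) 1, (u t - v t)^4) =
      ∫ t in Set.Ioc (0:ℝ) 1, (c₁ * z t + c₂ * w t)^4 := by
    refine integral_congr_ae (Filter.Eventually.of_forall fun t => ?_)
    show (u t - v t)^4 = (c₁ * z t + c₂ * w t)^4
    rw [hpt t]
  rw [e]
  have hmono : ∫ t in Set.Ioc (0:ℝ) 1, (c₁ * z t + c₂ * w t)^4 ≤
      ∫ t in Set.Ioc (0:ℝ) 1, (8*c₁^4 * z t^4 + 8*c₂^4 * w t^4) := by
    refine setIntegral_mono_on
      (aux_intg (((continuousOn_const.mul hz).add (continuousOn_const.mul hw)).pow 4))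
      (((aux_intg (hz.pow 4)).const_mul _).add ((aux_intg (hw.pow 4)).const_mul _))
      measurableSet_Ioc (fun t _ => ?_)
    calc (c₁ * z t + c₂ * w t)^4 ≤ 8*(c₁ * z t)^4 + 8*(c₂ * w t)^4 := aux_pq _ _
      _ = 8*c₁^4 * z t^4 + 8*c₂^4 * w t^4 := by ring
  calc _ ≤ _ := hmono
    _ = 8*c₁^4 * (∫ t in Set.Ioc (0:ℝ) 1, z t^4) + 8*c₂^4 * (∫ t in Set.Ioc (0:ℝ) 1, w t^4) := by
      rw [integral_add (f := fun t => 8*c₁^4 * z t^4) (g := fun t => 8*c₂^4 * w t^4) ((aux_intg (hz.pow 4)).const_mul _) ((aux_intg (hw.pow 4)).const_mul _),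
        MeasureTheory.integral_const_mul, MeasureTheory.integral_const_mul]

lemma aux_8pow : ((8:ℝ)) ^ ((3:ℝ)/4) ≤ 5 := by
  have h1 : ((8:ℝ)) ^ ((3:ℝ)/4) = (512:ℝ) ^ ((1:ℝ)/4) := by
    rw [show (3:ℝ)/4 = (3:ℝ)*(1/4) by ring, Real.rpow_mul (by norm_num),
      show ((8:ℝ)^(3:ℝ)) = 512 by
        rw [show (3:ℝ) = ((3:ℕ):ℝ) by norm_num, Real.rpow_natCast]; norm_num]
  have h2 : (512:ℝ) ^ ((1:ℝ)/4) ≤ (625:ℝ) ^ ((1:ℝ)/4) :=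
    Real.rpow_le_rpow (by norm_num) (by norm_num) (by norm_num)
  have h3 : (625:ℝ) ^ ((1:ℝ)/4) = 5 := by
    rw [show (625:ℝ) = (5:ℝ)^(4:ℕ) by norm_num, ← Real.rpow_natCast (5:ℝ) 4,
      ← Real.rpow_mul (by norm_num)]
    norm_num
  linarith

lemma aux_diff {x y : ℝ → ℝ} (hx : ContinuousOn x (Set.Icc 0 1))
    (hy : ContinuousOn y (Set.Icc 0 1))
    {M : ℝ} (hM : 0 ≤ M) (hz : ∀ t ∈ Set.Icc (0:ℝ) 1, |x t - y t| ≤ M)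
    {a b : ℝ} (ha : a = (∫ t in Set.Ioc (0:ℝ) 1, x t^4) ^ ((1:ℝ)/4))
    (hb : b = (∫ t in Set.Ioc (0:ℝ) 1, y t^4) ^ ((1:ℝ)/4))
    (hD : 0 < a^3 + a^2*b + a*b^2 + b^3) :
    |a - b| ≤ 15 * M := by
  set A := ∫ t in Set.Ioc (0:ℝ) 1, x t^4 with hA
  set B := ∫ t in Set.Ioc (0:ℝ) 1, y t^4 with hB
  have hA0 : 0 ≤ A := setIntegral_nonneg measurableSet_Ioc (fun t _ => by positivity)
  have hB0 : 0 ≤ B := setIntegral_nonneg measurableSet_Ioc (fun t _ => by positivity)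
  have ha0 : 0 ≤ a := ha ▸ Real.rpow_nonneg hA0 _
  have hb0 : 0 ≤ b := hb ▸ Real.rpow_nonneg hB0 _
  have ha4 : a^4 = A := by rw [ha]; exact aux_quarter hA0
  have hb4 : b^4 = B := by rw [hb]; exact aux_quarter hB0
  have hab0 : 0 ≤ a + b := by linarith
  -- pointwise bound
  have hpt : ∀ t ∈ Set.Ioc (0:ℝ) 1, |x t^4 - y t^4| ≤ M * (|x t| + |y t|)^3 := by
    intro t ht
    have hm : |x t - y t| ≤ M := hz t (Set.Ioc_subset_Icc_self ht)
    set p := x t; set q := y t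
    have e : p^4 - q^4 = (p - q) * (p^3 + p^2*q + p*q^2 + q^3) := by ring
    rw [e, abs_mul]
    have h1 : |p^3 + p^2*q + p*q^2 + q^3| ≤ (|p| + |q|)^3 := by
      calc |p^3 + p^2*q + p*q^2 + q^3| ≤ |p^3| + |p^2*q| + |p*q^2| + |q^3| := by
            calc |p^3 + p^2*q + p*q^2 + q^3| ≤ |p^3 + p^2*q + p*q^2| + |q^3| := abs_add_le _ _
              _ ≤ |p^3 + p^2*q| + |p*q^2| + |q^3| := by linarith [abs_add_le (p^3 + p^2*q) (p*q^2)]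
              _ ≤ |p^3| + |p^2*q| + |p*q^2| + |q^3| := by linarith [abs_add_le (p^3) (p^2*q)]
        _ = |p| ^ 3 + |p| ^ 2 * |q| + |p| * |q| ^ 2 + |q| ^ 3 := by
            simp [abs_mul, abs_pow]
        _ ≤ (|p| + |q|)^3 := by nlinarith [abs_nonneg p, abs_nonneg q]
    exact mul_le_mul hm h1 (abs_nonneg _) hM
  -- |A - B| ≤ M * ∫ (|x|+|y|)^3
  have habs : |A - B| ≤ M * ∫ t in Set.Ioc (0:ℝ) 1, (|x t| + |y t|)^3 := by
    have h1 : A - B = ∫ t in Set.Ioc (0:ℝ) 1, (x t^4 - y t^4) := by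
      rw [integral_sub (f := fun t => x t^4) (g := fun t => y t^4) (aux_intg (hx.pow 4)) (aux_intg (hy.pow 4))]
    rw [h1]
    calc |∫ t in Set.Ioc (0:ℝ) 1, (x t^4 - y t^4)| ≤
        ∫ t in Set.Ioc (0:ℝ) 1, |x t^4 - y t^4| := by
          simpa [Real.norm_eq_abs] using
            norm_integral_le_integral_norm (μ := volume.restrict (Set.Ioc (0:ℝ) 1))
              (fun t => x t^4 - y t^4)
      _ ≤ ∫ t in Set.Ioc (0:ℝ) 1, M * (|x t| + |y t|)^3 := by
          refine setIntegral_mono_on (aux_intg ((hx.pow 4).sub (hy.pow 4)).abs)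
            ((aux_intg ((hx.abs.add hy.abs).pow 3)).const_mul _) measurableSet_Ioc hpt
      _ = M * ∫ t in Set.Ioc (0:ℝ) 1, (|x t| + |y t|)^3 := integral_const_mul _ _
  -- ∫ (|x|+|y|)^3 ≤ (8*(A+B))^(3/4) ≤ 5*(a+b)^3
  have hcube : ∫ t in Set.Ioc (0:ℝ) 1, (|x t| + |y t|)^3 ≤ 5*(a+b)^3 := by
    have h4 : ∫ t in Set.Ioc (0:ℝ) 1, (|x t| + |y t|)^3 ≤ (∫ t in Set.Ioc (0:ℝ) 1, (|x t| + |y t|)^4) ^ ((3:ℝ)/4) := aux_cube (h := fun t => |x t| + |y t|) (hx.abs.add hy.abs) (fun t => by positivity)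
    have h5 : (∫ t in Set.Ioc (0:ℝ) 1, (|x t| + |y t|)^4) ≤ 8*(A+B) := by
      calc (∫ t in Set.Ioc (0:ℝ) 1, (|x t| + |y t|)^4)
          ≤ ∫ t in Set.Ioc (0:ℝ) 1, (8 * x t^4 + 8 * y t^4) := by
            refine setIntegral_mono_on (aux_intg ((hx.abs.add hy.abs).pow 4))
              (((aux_intg (hx.pow 4)).const_mul _).add ((aux_intg (hy.pow 4)).const_mul _))
              measurableSet_Ioc (fun t _ => ?_)
            calc (|x t| + |y t|)^4 ≤ 8*|x t|^4 + 8*|y t|^4 := aux_pq _ _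
              _ = 8 * x t^4 + 8 * y t^4 := by
                  rw [show |x t|^4 = |x t^4| by rw [abs_pow],
                    show |y t|^4 = |y t^4| by rw [abs_pow],
                    abs_of_nonneg (by positivity : (0:ℝ) ≤ x t^4),
                    abs_of_nonneg (by positivity : (0:ℝ) ≤ y t^4)]
        _ = 8*(A+B) := by
            rw [integral_add (f := fun t => 8 * x t^4) (g := fun t => 8 * y t^4) ((aux_intg (hx.pow 4)).const_mul _)
              ((aux_intg (hy.pow 4)).const_mul _), MeasureTheory.integral_const_mul, MeasureTheory.integral_const_mul]
            ring
    have h40 : 0 ≤ ∫ t in Set.Ioc (0:ℝ) 1, (|x t| + |y t|)^4 :=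
      setIntegral_nonneg measurableSet_Ioc (fun t _ => by positivity)
    have h6 : (∫ t in Set.Ioc (0:ℝ) 1, (|x t| + |y t|)^4) ^ ((3:ℝ)/4) ≤ (8*(A+B))^((3:ℝ)/4) :=
      Real.rpow_le_rpow h40 h5 (by norm_num)
    have hab4 : A + B ≤ (a+b)^4 := by
      rw [← ha4, ← hb4]
      nlinarith [mul_nonneg ha0 hb0, mul_nonneg (mul_nonneg ha0 ha0) hb0,
        mul_nonneg (mul_nonneg hb0 hb0) ha0, sq_nonneg (a*b), sq_nonneg a, sq_nonneg b]
    have h7 : (8*(A+B))^((3:ℝ)/4) ≤ 5*(a+b)^3 := by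
      have e1 : ((a+b)^4 : ℝ) ^ ((3:ℝ)/4) = (a+b)^3 := by
        rw [← Real.rpow_natCast (a+b) 4, ← Real.rpow_mul hab0,
          show ((4:ℕ):ℝ) * ((3:ℝ)/4) = ((3:ℕ):ℝ) by norm_num, Real.rpow_natCast]
      calc (8*(A+B))^((3:ℝ)/4) ≤ (8*(a+b)^4)^((3:ℝ)/4) :=
            Real.rpow_le_rpow (by positivity) (by linarith) (by norm_num)
        _ = (8:ℝ)^((3:ℝ)/4) * ((a+b)^4)^((3:ℝ)/4) :=
            Real.mul_rpow (by norm_num) (by positivity)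
        _ = (8:ℝ)^((3:ℝ)/4) * (a+b)^3 := by rw [e1]
        _ ≤ 5*(a+b)^3 := by
            have := aux_8pow
            nlinarith [pow_nonneg hab0 3]
    linarith
  -- combine
  have hD3 : (a+b)^3 ≤ 3 * (a^3 + a^2*b + a*b^2 + b^3) := by
    nlinarith [mul_nonneg ha0 hb0, mul_nonneg (mul_nonneg ha0 ha0) hb0,
      mul_nonneg (mul_nonneg hb0 hb0) ha0]
  have hfin : |A - B| ≤ 15 * M * (a^3 + a^2*b + a*b^2 + b^3) := by
    have hc30 : 0 ≤ ∫ t in Set.Ioc (0:ℝ) 1, (|x t| + |y t|)^3 :=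
      setIntegral_nonneg measurableSet_Ioc (fun t _ => by positivity)
    calc |A - B| ≤ M * ∫ t in Set.Ioc (0:ℝ) 1, (|x t| + |y t|)^3 := habs
      _ ≤ M * (5*(a+b)^3) := mul_le_mul_of_nonneg_left hcube hM
      _ ≤ 15 * M * (a^3 + a^2*b + a*b^2 + b^3) := by nlinarith
  have hABfac : A - B = (a - b) * (a^3 + a^2*b + a*b^2 + b^3) := by
    rw [← ha4, ← hb4]; ring
  have : |a - b| * (a^3 + a^2*b + a*b^2 + b^3) ≤ 15 * M * (a^3 + a^2*b + a*b^2 + b^3) := by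
    calc |a - b| * (a^3 + a^2*b + a*b^2 + b^3)
        = |(a - b) * (a^3 + a^2*b + a*b^2 + b^3)| := by
          rw [abs_mul, abs_of_nonneg hD.le]
      _ = |A - B| := by rw [hABfac]
      _ ≤ _ := hfin
  exact le_of_mul_le_mul_right this hD


/-- For the truncated Burgers nonlinearity `F_R` (`F_R(x) = x²` if `|x|_{L⁴} ≤ R`,
`F_R(x) = R² x²/|x|²_{L⁴}` otherwise) there are `α, β > 0` with `2α/(1−β) ∈ [1,2)` and
`c_R > 0` such that `|F_R(x) − F_R(y)|_{L²} ≤ c_R |x−y|_{L²}^α ‖x−y‖^β` for all `C¹`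
functions `x, y` on `[0,1]` vanishing at the endpoints. -/
theorem stmt11 (R : ℝ) (hR : 0 < R)
    (nL4 : (ℝ → ℝ) → ℝ)
    (hnL4 : ∀ x : ℝ → ℝ, nL4 x = (∫ ξ in (0:ℝ)..1, x ξ ^ 4) ^ ((1:ℝ)/4))
    (FR : (ℝ → ℝ) → ℝ → ℝ)
    (hFR : ∀ (x : ℝ → ℝ) (ξ : ℝ), FR x ξ =
      if nL4 x ≤ R then x ξ ^ 2 else R ^ 2 * x ξ ^ 2 / nL4 x ^ 2) :
    ∃ α : ℝ, 0 < α ∧ ∃ β : ℝ, 0 < β ∧ 2 * α / (1 - β) ∈ Set.Ico (1:ℝ) 2 ∧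
      ∃ c : ℝ, 0 < c ∧ ∀ x y x' y' : ℝ → ℝ,
        (∀ ξ ∈ Set.Icc (0:ℝ) 1, HasDerivAt x (x' ξ) ξ) →
        (∀ ξ ∈ Set.Icc (0:ℝ) 1, HasDerivAt y (y' ξ) ξ) →
        ContinuousOn x' (Set.Icc (0:ℝ) 1) → ContinuousOn y' (Set.Icc (0:ℝ) 1) →
        x 0 = 0 → x 1 = 0 → y 0 = 0 → y 1 = 0 →
        (∫ ξ in (0:ℝ)..1, (FR x ξ - FR y ξ) ^ 2) ^ ((1:ℝ)/2) ≤
          c * ((∫ ξ in (0:ℝ)..1, (x ξ - y ξ) ^ 2) ^ ((1:ℝ)/2)) ^ α *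
            (∫ ξ in (0:ℝ)..1, (x' ξ - y' ξ) ^ 2) ^ (β / 2) := by
  refine ⟨1/3, by norm_num, 1/3, by norm_num, by constructor <;> norm_num,
    ((415507456:ℝ) * R^8) ^ ((1:ℝ)/6), by positivity, ?_⟩
  intro x y x' y' hx hy hx'c hy'c hx0 hx1 hy0 hy1
  have hxc : ContinuousOn x (Set.Icc 0 1) :=
    fun ξ hξ => (hx ξ hξ).continuousAt.continuousWithinAt
  have hyc : ContinuousOn y (Set.Icc 0 1) :=
    fun ξ hξ => (hy ξ hξ).continuousAt.continuousWithinAt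
  have hzc : ContinuousOn (fun s => x s - y s) (Set.Icc 0 1) := hxc.sub hyc
  have hz'c : ContinuousOn (fun s => x' s - y' s) (Set.Icc 0 1) := hx'c.sub hy'c
  simp only [intervalIntegral.integral_of_le (zero_le_one (α := ℝ))]
  set I2 := ∫ t in Set.Ioc (0:ℝ) 1, (x t - y t)^2 with hI2
  set I2' := ∫ t in Set.Ioc (0:ℝ) 1, (x' t - y' t)^2 with hI2'
  have hI20 : 0 ≤ I2 := setIntegral_nonneg measurableSet_Ioc (fun t _ => by positivity)
  have hI2'0 : 0 ≤ I2' := setIntegral_nonneg measurableSet_Ioc (fun t _ => by positivity)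
  set S := 2 * I2 ^ ((1:ℝ)/2) * I2' ^ ((1:ℝ)/2) with hS
  have hS0 : 0 ≤ S := by
    have := Real.rpow_nonneg hI20 ((1:ℝ)/2)
    have := Real.rpow_nonneg hI2'0 ((1:ℝ)/2)
    positivity
  set M := Real.sqrt S with hMdef
  have hM0 : 0 ≤ M := Real.sqrt_nonneg _
  have hM2 : M^2 = S := Real.sq_sqrt hS0
  -- Agmon inequality : |z ξ| ≤ M on [0,1]
  have hzM : ∀ ξ ∈ Set.Icc (0:ℝ) 1, |x ξ - y ξ| ≤ M := by
    intro ξ hξ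
    have key : (x ξ - y ξ)^2 ≤ S := by
      have hzd : ∀ t ∈ Set.Icc (0:ℝ) 1, HasDerivAt (fun s => x s - y s) (x' t - y' t) t :=
        fun t ht => (hx t ht).sub (hy t ht)
      have hsub : Set.uIcc (0:ℝ) ξ ⊆ Set.Icc 0 1 := by
        rw [Set.uIcc_of_le hξ.1]; exact Set.Icc_subset_Icc le_rfl hξ.2
      have hder : ∀ t ∈ Set.uIcc (0:ℝ) ξ, HasDerivAt (fun s => (x s - y s)^2)
          (2*(x t - y t)*(x' t - y' t)) t := by
        intro t ht
        have h : HasDerivAt (fun s => (x s - y s)^2) (((2:ℕ):ℝ) * (x t - y t)^(2-1) * (x' t - y' t)) t :=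
          (hzd t (hsub ht)).fun_pow 2
        convert h using 1
        push_cast; ring
      have hint : IntervalIntegrable (fun t => 2*(x t - y t)*(x' t - y' t)) volume 0 ξ :=
        (((continuousOn_const.mul hzc).mul hz'c).mono hsub).intervalIntegrable
      have hftc := intervalIntegral.integral_eq_sub_of_hasDerivAt hder hint
      rw [hx0, hy0] at hftc
      have habs : ∫ t in (0:ℝ)..ξ, 2*(x t - y t)*(x' t - y' t) ≤
          ∫ t in (0:ℝ)..ξ, 2*(|x t - y t| * |x' t - y' t|) := by
        refine intervalIntegral.integral_mono_on hξ.1 hint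
          (((continuousOn_const.mul (hzc.abs.mul hz'c.abs)).mono hsub).intervalIntegrable)
          (fun t ht => ?_)
        have h1 : (x t - y t)*(x' t - y' t) ≤ |(x t - y t)*(x' t - y' t)| := le_abs_self _
        rw [abs_mul] at h1
        linarith
      have hcont01 : ContinuousOn (fun t => 2*(|x t - y t| * |x' t - y' t|))
          (Set.uIcc (0:ℝ) 1) := by
        rw [Set.uIcc_of_le (zero_le_one (α := ℝ))]
        exact continuousOn_const.mul (hzc.abs.mul hz'c.abs)
      have hext : ∫ t in (0:ℝ)..ξ, 2*(|x t - y t| * |x' t - y' t|) ≤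
          ∫ t in (0:ℝ)..1, 2*(|x t - y t| * |x' t - y' t|) :=
        intervalIntegral.integral_mono_interval le_rfl hξ.1 hξ.2
          (Filter.Eventually.of_forall (fun t => by positivity))
          hcont01.intervalIntegrable
      have hcs : ∫ t in (0:ℝ)..1, 2*(|x t - y t| * |x' t - y' t|) ≤ S := by
        rw [intervalIntegral.integral_of_le (zero_le_one (α := ℝ)), MeasureTheory.integral_const_mul]
        have := aux_cs hzc hz'c
        rw [hS]
        have h2 : (∫ t in Set.Ioc (0:ℝ) 1, |x t - y t| * |x' t - y' t|) ≤
            I2 ^ ((1:ℝ)/2) * I2' ^ ((1:ℝ)/2) := this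
        linarith
      calc (x ξ - y ξ)^2 = (x ξ - y ξ)^2 - (0 - 0)^2 := by ring
        _ = ∫ t in (0:ℝ)..ξ, 2*(x t - y t)*(x' t - y' t) := hftc.symm
        _ ≤ S := le_trans habs (le_trans hext hcs)
    have h := Real.sqrt_le_sqrt key
    rwa [Real.sqrt_sq_eq_abs] at h
  -- L⁴ norms
  set A := ∫ t in Set.Ioc (0:ℝ) 1, x t^4 with hA
  set B := ∫ t in Set.Ioc (0:ℝ) 1, y t^4 with hB
  have hA0 : 0 ≤ A := setIntegral_nonneg measurableSet_Ioc (fun t _ => by positivity)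
  have hB0 : 0 ≤ B := setIntegral_nonneg measurableSet_Ioc (fun t _ => by positivity)
  have haa : nL4 x = A ^ ((1:ℝ)/4) := by
    rw [hnL4 x, intervalIntegral.integral_of_le (zero_le_one (α := ℝ))]
  have hbb : nL4 y = B ^ ((1:ℝ)/4) := by
    rw [hnL4 y, intervalIntegral.integral_of_le (zero_le_one (α := ℝ))]
  have ha0 : 0 ≤ nL4 x := haa ▸ Real.rpow_nonneg hA0 _
  have hb0 : 0 ≤ nL4 y := hbb ▸ Real.rpow_nonneg hB0 _
  have ha4 : (nL4 x)^4 = A := by rw [haa]; exact aux_quarter hA0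
  have hb4 : (nL4 y)^4 = B := by rw [hbb]; exact aux_quarter hB0
  -- truncation scalars
  set sx := if nL4 x ≤ R then (1:ℝ) else R / nL4 x with hsx
  set sy := if nL4 y ≤ R then (1:ℝ) else R / nL4 y with hsy
  have hFRx : ∀ t, FR x t = (sx * x t)^2 := by
    intro t
    rw [hFR, hsx]
    by_cases h : nL4 x ≤ R
    · rw [if_pos h, if_pos h, one_mul]
    · have hax : R < nL4 x := not_le.1 h
      have hane : nL4 x ≠ 0 := (hR.trans hax).ne'
      rw [if_neg h, if_neg h]
      field_simp
  have hFRy : ∀ t, FR y t = (sy * y t)^2 := by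
    intro t
    rw [hFR, hsy]
    by_cases h : nL4 y ≤ R
    · rw [if_pos h, if_pos h, one_mul]
    · have hax : R < nL4 y := not_le.1 h
      have hane : nL4 y ≠ 0 := (hR.trans hax).ne'
      rw [if_neg h, if_neg h]
      field_simp
  have hsxA : sx^4 * A ≤ R^4 := by
    rw [hsx]
    by_cases h : nL4 x ≤ R
    · rw [if_pos h, one_pow, one_mul, ← ha4]
      exact pow_le_pow_left₀ ha0 h 4
    · have hax : R < nL4 x := not_le.1 h
      have hane : nL4 x ≠ 0 := (hR.trans hax).ne'
      rw [if_neg h, ← ha4]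
      exact le_of_eq (by field_simp)
  have hsyB : sy^4 * B ≤ R^4 := by
    rw [hsy]
    by_cases h : nL4 y ≤ R
    · rw [if_pos h, one_pow, one_mul, ← hb4]
      exact pow_le_pow_left₀ hb0 h 4
    · have hax : R < nL4 y := not_le.1 h
      have hane : nL4 y ≠ 0 := (hR.trans hax).ne'
      rw [if_neg h, ← hb4]
      exact le_of_eq (by field_simp)
  -- the truncated functions
  have hxc4 : ContinuousOn (fun t => x t ^ 4) (Set.Icc (0:ℝ) 1) := hxc.pow 4
  have hyc4 : ContinuousOn (fun t => y t ^ 4) (Set.Icc (0:ℝ) 1) := hyc.pow 4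
  have huc : ContinuousOn (fun t => sx * x t) (Set.Icc (0:ℝ) 1) := continuousOn_const.mul hxc
  have hvc : ContinuousOn (fun t => sy * y t) (Set.Icc (0:ℝ) 1) := continuousOn_const.mul hyc
  set Q := ∫ t in Set.Ioc (0:ℝ) 1, ((sx * x t)^2 - (sy * y t)^2)^2 with hQ
  have hQ0 : 0 ≤ Q := setIntegral_nonneg measurableSet_Ioc (fun t _ => by positivity)
  have heQ : (∫ t in Set.Ioc (0:ℝ) 1, (FR x t - FR y t)^2) = Q := by
    refine integral_congr_ae (Filter.Eventually.of_forall fun t => ?_)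
    show (FR x t - FR y t)^2 = ((sx * x t)^2 - (sy * y t)^2)^2
    rw [hFRx t, hFRy t]
  -- Cauchy-Schwarz for Q
  have hCS : Q ≤ (∫ t in Set.Ioc (0:ℝ) 1, (sx * x t + sy * y t)^4) ^ ((1:ℝ)/2) *
      (∫ t in Set.Ioc (0:ℝ) 1, (sx * x t - sy * y t)^4) ^ ((1:ℝ)/2) := by
    have h := aux_cs (f := fun t => (sx * x t + sy * y t)^2)
      (g := fun t => (sx * x t - sy * y t)^2) ((huc.add hvc).pow 2) ((huc.sub hvc).pow 2)
    have e1 : (∫ t in Set.Ioc (0:ℝ) 1, |(sx * x t + sy * y t)^2| * |(sx * x t - sy * y t)^2|)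
        = Q := by
      refine integral_congr_ae (Filter.Eventually.of_forall fun t => ?_)
      show |(sx * x t + sy * y t)^2| * |(sx * x t - sy * y t)^2|
        = ((sx * x t)^2 - (sy * y t)^2)^2
      rw [abs_of_nonneg (by positivity), abs_of_nonneg (by positivity)]
      ring
    have e2 : (∫ t in Set.Ioc (0:ℝ) 1, ((sx * x t + sy * y t)^2)^2)
        = ∫ t in Set.Ioc (0:ℝ) 1, (sx * x t + sy * y t)^4 := by
      refine integral_congr_ae (Filter.Eventually.of_forall fun t => ?_)
      show ((sx * x t + sy * y t)^2)^2 = (sx * x t + sy * y t)^4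
      ring
    have e3 : (∫ t in Set.Ioc (0:ℝ) 1, ((sx * x t - sy * y t)^2)^2)
        = ∫ t in Set.Ioc (0:ℝ) 1, (sx * x t - sy * y t)^4 := by
      refine integral_congr_ae (Filter.Eventually.of_forall fun t => ?_)
      show ((sx * x t - sy * y t)^2)^2 = (sx * x t - sy * y t)^4
      ring
    rw [e1, e2, e3] at h
    exact h
  have hI40 : 0 ≤ ∫ t in Set.Ioc (0:ℝ) 1, (sx * x t + sy * y t)^4 :=
    setIntegral_nonneg measurableSet_Ioc (fun t _ => by positivity)
  have hI4d0 : 0 ≤ ∫ t in Set.Ioc (0:ℝ) 1, (sx * x t - sy * y t)^4 :=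
    setIntegral_nonneg measurableSet_Ioc (fun t _ => by positivity)
  -- bound on the sum integral
  have hsum : ∫ t in Set.Ioc (0:ℝ) 1, (sx * x t + sy * y t)^4 ≤ 16*R^4 := by
    have h := aux_split (u := fun t => sx * x t + sy * y t) (v := fun _ => (0:ℝ))
      hxc hyc sx sy (fun t => by ring)
    have e : (∫ t in Set.Ioc (0:ℝ) 1, ((fun t => sx * x t + sy * y t) t - (fun _ => (0:ℝ)) t)^4)
        = ∫ t in Set.Ioc (0:ℝ) 1, (sx * x t + sy * y t)^4 := by
      refine integral_congr_ae (Filter.Eventually.of_forall fun t => ?_)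
      show ((sx * x t + sy * y t) - 0)^4 = (sx * x t + sy * y t)^4
      ring
    rw [e] at h
    calc ∫ t in Set.Ioc (0:ℝ) 1, (sx * x t + sy * y t)^4
        ≤ 8*sx^4 * A + 8*sy^4 * B := h
      _ ≤ 16*R^4 := by linarith [hsxA, hsyB]
  have hdiff16 : ∫ t in Set.Ioc (0:ℝ) 1, (sx * x t - sy * y t)^4 ≤ 16*R^4 := by
    have h := aux_split (u := fun t => sx * x t) (v := fun t => sy * y t)
      hxc hyc sx (-sy) (fun t => by ring)
    calc ∫ t in Set.Ioc (0:ℝ) 1, (sx * x t - sy * y t)^4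
        ≤ 8*sx^4 * A + 8*(-sy)^4 * B := h
      _ = 8*sx^4 * A + 8*sy^4 * B := by ring
      _ ≤ 16*R^4 := by linarith [hsxA, hsyB]
  -- pointwise fourth-power bound for z
  have hz40 : 0 ≤ ∫ t in Set.Ioc (0:ℝ) 1, (x t - y t)^4 :=
    setIntegral_nonneg measurableSet_Ioc (fun t _ => by positivity)
  have hz4M : ∫ t in Set.Ioc (0:ℝ) 1, (x t - y t)^4 ≤ M^4 := by
    refine aux_const_bound (aux_intg (hzc.pow 4)) (fun t ht => ?_)
    have h1 : |x t - y t| ≤ M := hzM t (Set.Ioc_subset_Icc_self ht)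
    calc (x t - y t)^4 = |x t - y t|^4 := by
          rw [← abs_pow, abs_of_nonneg (by positivity)]
      _ ≤ M^4 := pow_le_pow_left₀ (abs_nonneg _) h1 4
  -- main case analysis : ∫ (u - v)^4 ≤ 405008 * M^4
  have hdiffM : ∫ t in Set.Ioc (0:ℝ) 1, (sx * x t - sy * y t)^4 ≤ 405008*M^4 := by
    have hM40 : 0 ≤ M^4 := by positivity
    by_cases hCa : nL4 x ≤ R
    · by_cases hCb : nL4 y ≤ R
      · -- both small
        have e : (∫ t in Set.Ioc (0:ℝ) 1, (sx * x t - sy * y t)^4)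
            = ∫ t in Set.Ioc (0:ℝ) 1, (x t - y t)^4 := by
          refine integral_congr_ae (Filter.Eventually.of_forall fun t => ?_)
          show (sx * x t - sy * y t)^4 = (x t - y t)^4
          rw [hsx, hsy, if_pos hCa, if_pos hCb, one_mul, one_mul]
        rw [e]
        linarith [hz4M, hM40]
      · -- a ≤ R < b
        have hbR : R < nL4 y := not_le.1 hCb
        have hbpos : 0 < nL4 y := hR.trans hbR
        have hbne : nL4 y ≠ 0 := hbpos.ne'
        have hab15 : |nL4 x - nL4 y| ≤ 15*M := by
          refine aux_diff hxc hyc hM0 hzM haa hbb ?_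
          have h1 : 0 < nL4 y^3 := pow_pos hbpos 3
          have h2 : 0 ≤ nL4 x^3 := pow_nonneg ha0 3
          have h3 : (0:ℝ) ≤ nL4 x^2 * nL4 y := by positivity
          have h4 : (0:ℝ) ≤ nL4 x * nL4 y^2 := by positivity
          linarith
        have h := aux_split (u := fun t => sx * x t) (v := fun t => sy * y t)
          hzc hyc 1 (1 - R/nL4 y) (fun t => by
            show sx * x t - sy * y t = 1*(x t - y t) + (1 - R/nL4 y)*y t
            rw [hsx, hsy, if_pos hCa, if_neg hCb]
            ring)
        have e2 : (1 - R/nL4 y)^4 * B = (nL4 y - R)^4 := by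
          rw [← hb4]; first
          | (field_simp; ring)
          | field_simp
        have hbRM : nL4 y - R ≤ 15*M := by
          have h1 : nL4 y - nL4 x ≤ |nL4 x - nL4 y| := by
            rw [abs_sub_comm]; exact le_abs_self _
          linarith
        have h4 : (nL4 y - R)^4 ≤ 50625*M^4 := by
          calc (nL4 y - R)^4 ≤ (15*M)^4 := pow_le_pow_left₀ (by linarith) hbRM 4
            _ = 50625*M^4 := by ring
        calc ∫ t in Set.Ioc (0:ℝ) 1, (sx * x t - sy * y t)^4
            ≤ 8*(1:ℝ)^4 * (∫ t in Set.Ioc (0:ℝ) 1, (x t - y t)^4)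
              + 8*(1 - R/nL4 y)^4 * B := h
          _ = 8 * (∫ t in Set.Ioc (0:ℝ) 1, (x t - y t)^4) + 8*(nL4 y - R)^4 := by
              rw [show (8:ℝ)*(1 - R/nL4 y)^4*B = 8*((1 - R/nL4 y)^4*B) by ring, e2]; ring
          _ ≤ 405008*M^4 := by linarith [hz4M, h4]
    · have haR : R < nL4 x := not_le.1 hCa
      have hapos : 0 < nL4 x := hR.trans haR
      have hane : nL4 x ≠ 0 := hapos.ne'
      have hab15 : |nL4 x - nL4 y| ≤ 15*M := by
        refine aux_diff hxc hyc hM0 hzM haa hbb ?_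
        have h1 : 0 < nL4 x^3 := pow_pos hapos 3
        have h2 : 0 ≤ nL4 y^3 := pow_nonneg hb0 3
        have h3 : (0:ℝ) ≤ nL4 x^2 * nL4 y := by positivity
        have h4 : (0:ℝ) ≤ nL4 x * nL4 y^2 := by positivity
        linarith
      by_cases hCb : nL4 y ≤ R
      · -- b ≤ R < a
        have h := aux_split (u := fun t => sx * x t) (v := fun t => sy * y t)
          hzc hxc 1 (R/nL4 x - 1) (fun t => by
            show sx * x t - sy * y t = 1*(x t - y t) + (R/nL4 x - 1)*x t
            rw [hsx, hsy, if_neg hCa, if_pos hCb]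
            ring)
        have e2 : (R/nL4 x - 1)^4 * A = (nL4 x - R)^4 := by
          rw [← ha4]; first
          | (field_simp; ring)
          | field_simp
        have haRM : nL4 x - R ≤ 15*M := by
          have h1 : nL4 x - nL4 y ≤ |nL4 x - nL4 y| := le_abs_self _
          linarith
        have h4 : (nL4 x - R)^4 ≤ 50625*M^4 := by
          calc (nL4 x - R)^4 ≤ (15*M)^4 := pow_le_pow_left₀ (by linarith) haRM 4
            _ = 50625*M^4 := by ring
        calc ∫ t in Set.Ioc (0:ℝ) 1, (sx * x t - sy * y t)^4
            ≤ 8*(1:ℝ)^4 * (∫ t in Set.Ioc (0:ℝ) 1, (x t - y t)^4)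
              + 8*(R/nL4 x - 1)^4 * A := h
          _ = 8 * (∫ t in Set.Ioc (0:ℝ) 1, (x t - y t)^4) + 8*(nL4 x - R)^4 := by
              rw [show (8:ℝ)*(R/nL4 x - 1)^4*A = 8*((R/nL4 x - 1)^4*A) by ring, e2]; ring
          _ ≤ 405008*M^4 := by linarith [hz4M, h4]
      · -- both large
        have hbR : R < nL4 y := not_le.1 hCb
        have hbpos : 0 < nL4 y := hR.trans hbR
        have hbne : nL4 y ≠ 0 := hbpos.ne'
        have h := aux_split (u := fun t => sx * x t) (v := fun t => sy * y t)
          hzc hyc (R/nL4 x) (R/nL4 x - R/nL4 y) (fun t => by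
            show sx * x t - sy * y t = (R/nL4 x)*(x t - y t) + (R/nL4 x - R/nL4 y)*y t
            rw [hsx, hsy, if_neg hCa, if_neg hCb]
            ring)
        have e2 : (R/nL4 x - R/nL4 y)^4 * B = (R/nL4 x)^4 * (nL4 y - nL4 x)^4 := by
          rw [← hb4]; first
          | (field_simp; ring)
          | field_simp
        have hra1 : (R/nL4 x)^4 ≤ 1 := by
          have : R/nL4 x ≤ 1 := (div_le_one hapos).2 haR.le
          have h0 : 0 ≤ R/nL4 x := by positivity
          calc (R/nL4 x)^4 ≤ 1^4 := pow_le_pow_left₀ h0 this 4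
            _ = 1 := one_pow 4
        have hba : (nL4 y - nL4 x)^4 ≤ 50625*M^4 := by
          have e3 : (nL4 y - nL4 x)^4 = |nL4 x - nL4 y|^4 := by
            rw [← abs_pow, abs_of_nonneg (by positivity)]; ring
          calc (nL4 y - nL4 x)^4 = |nL4 x - nL4 y|^4 := e3
            _ ≤ (15*M)^4 := pow_le_pow_left₀ (abs_nonneg _) hab15 4
            _ = 50625*M^4 := by ring
        have m1 : (R/nL4 x)^4 * (∫ t in Set.Ioc (0:ℝ) 1, (x t - y t)^4) ≤ 1 * M^4 :=
          mul_le_mul hra1 hz4M hz40 zero_le_one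
        have m2 : (R/nL4 x)^4 * (nL4 y - nL4 x)^4 ≤ 1 * (50625*M^4) :=
          mul_le_mul hra1 hba (by positivity) zero_le_one
        calc ∫ t in Set.Ioc (0:ℝ) 1, (sx * x t - sy * y t)^4
            ≤ 8*(R/nL4 x)^4 * (∫ t in Set.Ioc (0:ℝ) 1, (x t - y t)^4)
              + 8*(R/nL4 x - R/nL4 y)^4 * B := h
          _ = 8*((R/nL4 x)^4 * (∫ t in Set.Ioc (0:ℝ) 1, (x t - y t)^4))
              + 8*((R/nL4 x)^4 * (nL4 y - nL4 x)^4) := by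
              rw [show (8:ℝ)*(R/nL4 x - R/nL4 y)^4*B = 8*((R/nL4 x - R/nL4 y)^4*B) by ring, e2]
              ring
          _ ≤ 405008*M^4 := by linarith [m1, m2, hM40]
  -- interpolation between the two bounds on Q
  have h162 : (16:ℝ)*R^4 = (4*R^2)^2 := by ring
  have hf1 : (∫ t in Set.Ioc (0:ℝ) 1, (sx * x t + sy * y t)^4) ^ ((1:ℝ)/2) ≤ 4*R^2 :=
    aux_rpow_half_le (by positivity) (h162 ▸ hsum)
  have hg1 : (∫ t in Set.Ioc (0:ℝ) 1, (sx * x t - sy * y t)^4) ^ ((1:ℝ)/2) ≤ 4*R^2 :=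
    aux_rpow_half_le (by positivity) (h162 ▸ hdiff16)
  have hg2 : (∫ t in Set.Ioc (0:ℝ) 1, (sx * x t - sy * y t)^4) ^ ((1:ℝ)/2) ≤ 637*M^2 := by
    refine aux_rpow_half_le (by positivity) ?_
    have e : (637*M^2)^2 = 405769*M^4 := by ring
    have hM40 : 0 ≤ M^4 := by positivity
    linarith [hdiffM]
  have hQ16 : Q ≤ 16*R^4 := by
    calc Q ≤ _ := hCS
      _ ≤ (4*R^2) * (4*R^2) :=
        mul_le_mul hf1 hg1 (Real.rpow_nonneg hI4d0 _) (by positivity)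
      _ = 16*R^4 := by ring
  have hQM : Q ≤ 2548*R^2*M^2 := by
    calc Q ≤ _ := hCS
      _ ≤ (4*R^2) * (637*M^2) :=
        mul_le_mul hf1 hg2 (Real.rpow_nonneg hI4d0 _) (by positivity)
      _ = 2548*R^2*M^2 := by ring
  have hM4e : M^4 = 4*(I2*I2') := by
    have e1 : M^4 = S^2 := by rw [← hM2]; ring
    have e2 : (2 * I2^((1:ℝ)/2) * I2'^((1:ℝ)/2))^2
        = 4 * ((I2^((1:ℝ)/2))^2 * (I2'^((1:ℝ)/2))^2) := by ring
    rw [e1, hS, e2, ← Real.sqrt_eq_rpow, ← Real.sqrt_eq_rpow,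
      Real.sq_sqrt hI20, Real.sq_sqrt hI2'0]
  have hQ3 : Q^3 ≤ 415507456*R^8*(I2*I2') := by
    have hQsq : Q^2 ≤ (2548*R^2*M^2)^2 := pow_le_pow_left₀ hQ0 hQM 2
    calc Q^3 = Q * Q^2 := by ring
      _ ≤ (16*R^4) * (2548*R^2*M^2)^2 := mul_le_mul hQ16 hQsq (sq_nonneg Q) (by positivity)
      _ = 103876864*R^8*M^4 := by ring
      _ = 415507456*R^8*(I2*I2') := by rw [hM4e]; ring
  rw [heQ]
  have hstep : Q ^ ((1:ℝ)/2) ≤ (415507456*R^8*(I2*I2')) ^ ((1:ℝ)/6) := by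
    have h1 : Q ^ ((1:ℝ)/2) = (Q^3) ^ ((1:ℝ)/6) := by
      rw [← Real.rpow_natCast Q 3, ← Real.rpow_mul hQ0]; norm_num
    rw [h1]
    exact Real.rpow_le_rpow (by positivity) hQ3 (by norm_num)
  have hsplit : (415507456*R^8*(I2*I2')) ^ ((1:ℝ)/6)
      = ((415507456:ℝ)*R^8) ^ ((1:ℝ)/6) * I2 ^ ((1:ℝ)/6) * I2' ^ ((1:ℝ)/6) := by
    rw [show (415507456:ℝ)*R^8*(I2*I2') = ((415507456:ℝ)*R^8 * I2) * I2' by ring,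
      Real.mul_rpow (mul_nonneg (by positivity) hI20) hI2'0,
      Real.mul_rpow (by positivity) hI20]
  have he1 : (I2 ^ ((1:ℝ)/2)) ^ ((1:ℝ)/3) = I2 ^ ((1:ℝ)/6) := by
    rw [← Real.rpow_mul hI20]; norm_num
  have he2 : I2' ^ ((1:ℝ)/3/2) = I2' ^ ((1:ℝ)/6) := by norm_num
  rw [he1, he2]
  exact hstep.trans (le_of_eq hsplit)
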